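/- There exist absolute constants C and d₀ such that the following holds for all integers d ≥ d₀. Let 0 < ε, δ, α ≤ 1/3 and let n be an integer with n ≥ C·(1/ε)·log(1/(α·ε·δ)). Let x₁, …, xₙ, x ∈ ℝ^d satisfy #{i : ‖xᵢ − x‖₂ ≤ 1} ≥ 2n/3. For p ∈ ℝ^d let f(p) = #{i ∈ [n] : ‖p − xᵢ‖₂ ≤ √d}, and let V_B denote the Lebesgue volume of a ball of radius √d in ℝ^d. Then (4/δ)·V_B + ∫_{{p : f(p) ≥ 1 and ‖p − x‖₂ > 1 + √d}} e^{ε·min(f(p), 2n/3)} dp ≤ α·[ (4/δ)·V_B + ∫_{{p : f(p) ≥ 1}} e^{ε·min(f(p), 2n/3)} dp ]. -/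

import Mathlib

open MeasureTheory Metric
open scoped ENNReal Classical


lemma sqrt_exp_eq (t : ℝ) : Real.sqrt (Real.exp t) = Real.exp (t/2) := by
  rw [show Real.exp t = (Real.exp (t/2))^2 by rw [sq, ← Real.exp_add]; congr 1; ring]
  exact Real.sqrt_sq (Real.exp_pos _).le

lemma one_sub_ge_exp {x : ℝ} (h0 : 0 ≤ x) (hx : x ≤ 1/2) : Real.exp (-(2*x)) ≤ 1 - x := by
  have h1 := Real.add_one_le_exp (2*x)
  have h2 : Real.exp (-(2*x)) * Real.exp (2*x) = 1 := by rw [← Real.exp_add]; simp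
  nlinarith [Real.exp_pos (-(2*x)), Real.exp_pos (2*x)]

lemma exp_le_sqrt_one_sub {x : ℝ} (h0 : 0 ≤ x) (hx : x ≤ 1/2) :
    Real.exp (-x) ≤ Real.sqrt (1 - x) := by
  have h := Real.sqrt_le_sqrt (one_sub_ge_exp h0 hx)
  rw [sqrt_exp_eq] at h
  rw [show -x = -(2*x)/2 by ring]
  exact h

lemma sqrt_one_sub_le_exp {x : ℝ} (h0 : 0 ≤ x) (hx : x ≤ 1) :
    Real.sqrt (1 - x) ≤ Real.exp (-x/2) := by
  have h1 : 1 - x ≤ Real.exp (-x) := by nlinarith [Real.add_one_le_exp (-x)]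
  have h := Real.sqrt_le_sqrt h1
  rwa [sqrt_exp_eq] at h

lemma cap_key {F : Type*} [NormedAddCommGroup F] [InnerProductSpace ℝ F]
    (x y p : F) (D r a t : ℝ) (hD : 0 ≤ D) (ht : t = dist x y) (ht0 : 0 < t) (ht1 : t ≤ 1)
    (ha1 : 1 ≤ a) (hr2 : r^2 = D - a) (hr0 : 0 ≤ r)
    (hp1 : dist p x ≤ r) (hp2 : Real.sqrt D < dist p y) :
    dist p (x + ((a-1)/(2*t^2)) • (x - y)) ≤ Real.sqrt (r^2 - (a-1)^2/4) := by
  set lam := (a-1)/(2*t^2) with hlamdef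
  have hlam0 : 0 ≤ lam := div_nonneg (by linarith) (by positivity)
  have hv : ‖x - y‖ = t := by rw [ht, dist_eq_norm]
  have huv : p - y = (p - x) + (x - y) := by abel
  have h1 : ‖(p-x) + (x-y)‖^2 = ‖p-x‖^2 + 2*(inner ℝ (p-x) (x-y) : ℝ) + t^2 := by
    rw [norm_add_sq_real, hv]
  have h2 : D < ‖(p-x) + (x-y)‖^2 := by
    have hlt : Real.sqrt D < ‖p - y‖ := by rw [← dist_eq_norm]; exact hp2
    have h := pow_lt_pow_left₀ hlt (Real.sqrt_nonneg D) (by norm_num : 2 ≠ 0)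
    rw [Real.sq_sqrt hD] at h
    rwa [huv] at h
  have h3 : p - (x + lam • (x - y)) = (p - x) - lam • (x - y) := by abel
  have h4 : ‖(p-x) - lam • (x - y)‖^2
      = ‖p-x‖^2 - 2*(lam*(inner ℝ (p-x) (x-y) : ℝ)) + lam^2*t^2 := by
    rw [norm_sub_sq_real, real_inner_smul_right, norm_smul, Real.norm_eq_abs,
      abs_of_nonneg hlam0, hv]
    ring
  have hu1 : ‖p - x‖ ≤ r := by rw [← dist_eq_norm]; exact hp1
  have hu2 : ‖p-x‖^2 ≤ r^2 := by nlinarith [norm_nonneg (p-x)]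
  have hIm : a - t^2 < 2*(inner ℝ (p-x) (x-y) : ℝ) := by nlinarith
  have hstep : (a-1)^2/4 ≤ lam*(a - t^2) - lam^2*t^2 := by
    have hq' : lam*(a-t^2) - lam^2*t^2 - (a-1)^2/4 = ((a-1)*((a+1)*(1-t^2)))/(4*t^2) := by
      rw [hlamdef]; field_simp; ring
    have hnn : 0 ≤ ((a-1)*((a+1)*(1-t^2)))/(4*t^2) := by
      apply div_nonneg _ (by positivity)
      apply mul_nonneg (by linarith)
      apply mul_nonneg (by linarith)
      nlinarith
    linarith
  rw [dist_eq_norm, h3,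
    show ‖(p-x) - lam • (x - y)‖ = Real.sqrt (‖(p-x) - lam • (x-y)‖^2) by
      rw [Real.sqrt_sq (norm_nonneg _)]]
  apply Real.sqrt_le_sqrt
  rw [h4]
  nlinarith [mul_le_mul_of_nonneg_left hIm.le hlam0]

set_option maxHeartbeats 1000000 in
lemma near_volume (d n : ℕ) (hd : 100 ≤ d) (hn : 1 ≤ n)
    (xs : Fin n → EuclideanSpace ℝ (Fin d)) (x : EuclideanSpace ℝ (Fin d))
    (good : Finset (Fin n)) (hxg : ∀ i ∈ good, dist (xs i) x ≤ 1)
    (a : ℝ) (ha1 : 1 ≤ a) (ha8 : (a-1)^2 = 8 * Real.log (2*(n:ℝ))) :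
    ∃ S : Set (EuclideanSpace ℝ (Fin d)), MeasurableSet S ∧
      (∀ p ∈ S, ∀ i ∈ good, dist p (xs i) ≤ Real.sqrt d) ∧
      ENNReal.ofReal (Real.exp (-(2*a))) *
        volume (closedBall (0 : EuclideanSpace ℝ (Fin d)) (Real.sqrt d)) ≤ 2 * volume S := by
  have hvol : ∀ (c : EuclideanSpace ℝ (Fin d)) (ρ : ℝ), 0 ≤ ρ →
      volume (closedBall c ρ)
        = ENNReal.ofReal (ρ^d) * volume (closedBall (0 : EuclideanSpace ℝ (Fin d)) 1) := by
    intro c ρ hρ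
    rw [Measure.addHaar_closedBall' _ _ hρ, finrank_euclideanSpace_fin]
  set U := volume (closedBall (0 : EuclideanSpace ℝ (Fin d)) 1) with hU
  have hdR : (100:ℝ) ≤ (d:ℕ) := by exact_mod_cast hd
  have hd0 : (0:ℝ) < d := by linarith
  have hsd0 : (0:ℝ) ≤ Real.sqrt d := Real.sqrt_nonneg _
  have hsd10 : (10:ℝ) ≤ Real.sqrt d := by
    have h := Real.sqrt_le_sqrt hdR
    rwa [show Real.sqrt 100 = 10 by
      rw [show (100:ℝ) = 10^2 by norm_num, Real.sqrt_sq (by norm_num)]] at h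
  have hsdd : Real.sqrt d * Real.sqrt d = (d:ℝ) := Real.mul_self_sqrt hd0.le
  have ha0 : 0 ≤ a := by linarith
  have hB : volume (closedBall (0 : EuclideanSpace ℝ (Fin d)) (Real.sqrt d))
      = ENNReal.ofReal ((Real.sqrt d)^d) * U := hvol _ _ hsd0
  have hUfin : U ≠ ⊤ := measure_closedBall_lt_top.ne
  by_cases hca : a ≤ Real.sqrt (2*d)
  · -- main case
    have h2d0 : (0:ℝ) ≤ 2*d := by linarith
    have ha2 : a^2 ≤ 2*d := by
      have h := Real.sq_sqrt h2d0
      nlinarith [Real.sqrt_nonneg (2*(d:ℝ))]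
    have had : a ≤ (d:ℝ)/2 := by nlinarith
    set r := Real.sqrt ((d:ℝ) - a) with hrdef
    have hr2 : r^2 = (d:ℝ) - a := Real.sq_sqrt (by linarith)
    have hr0 : 0 ≤ r := Real.sqrt_nonneg _
    have hrd2 : (d:ℝ)/2 ≤ r^2 := by rw [hr2]; linarith
    have hrd : r ≤ Real.sqrt d := Real.sqrt_le_sqrt (by linarith)
    have hr1 : 1 ≤ r := by nlinarith
    set q := (a-1)^2/4 with hqdef
    have hq0 : 0 ≤ q := by positivity
    have hqd : q ≤ (d:ℝ)/2 := by nlinarith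
    have hqr : q ≤ r^2 := le_trans hqd hrd2
    refine ⟨closedBall x r ∩ ⋂ i ∈ good, closedBall (xs i) (Real.sqrt d),
      measurableSet_closedBall.inter
        (MeasurableSet.biInter good.countable_toSet fun i _ => measurableSet_closedBall),
      ?_, ?_⟩
    · intro p hp i hi
      have h := hp.2
      simp only [Set.mem_iInter] at h
      exact h i hi
    -- volume bound
    have hcap : ∀ i ∈ good, volume (closedBall x r \ closedBall (xs i) (Real.sqrt d)) ≤
        ENNReal.ofReal (Real.exp (-(q/2)) * r^d) * U := by
      intro i hi
      by_cases hxy : xs i = x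
      · have hempty : closedBall x r \ closedBall (xs i) (Real.sqrt d) = ∅ := by
          rw [hxy, Set.diff_eq_empty]
          exact closedBall_subset_closedBall hrd
        rw [hempty]
        simp
      · set t := dist x (xs i) with htdef
        have ht0 : 0 < t := dist_pos.2 (fun h => hxy h.symm)
        have ht1 : t ≤ 1 := by rw [htdef, dist_comm]; exact hxg i hi
        have hsub : closedBall x r \ closedBall (xs i) (Real.sqrt d) ⊆
            closedBall (x + ((a-1)/(2*t^2)) • (x - xs i)) (Real.sqrt (r^2 - (a-1)^2/4)) := by
          intro p hp
          obtain ⟨hp1, hp2⟩ := hp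
          rw [mem_closedBall] at hp1
          simp only [mem_closedBall, not_le] at hp2
          exact cap_key x (xs i) p d r a t hd0.le htdef ht0 ht1 ha1 hr2 hr0 hp1 hp2
        calc volume (closedBall x r \ closedBall (xs i) (Real.sqrt d))
            ≤ volume (closedBall (x + ((a-1)/(2*t^2)) • (x - xs i))
                (Real.sqrt (r^2 - (a-1)^2/4))) := measure_mono hsub
          _ = ENNReal.ofReal ((Real.sqrt (r^2 - q))^d) * U := hvol _ _ (Real.sqrt_nonneg _)
          _ ≤ ENNReal.ofReal (Real.exp (-(q/2)) * r^d) * U := by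
              apply mul_le_mul_left
              apply ENNReal.ofReal_le_ofReal
              have hr2pos : (0:ℝ) < r^2 := by nlinarith
              have hz1 : q/r^2 ≤ 1 := by rw [div_le_one hr2pos]; exact hqr
              have hz0 : 0 ≤ q/r^2 := by positivity
              have hsplit : Real.sqrt (r^2 - q) = r * Real.sqrt (1 - q/r^2) := by
                rw [show r^2 - q = r^2*(1 - q/r^2) by field_simp,
                  Real.sqrt_mul (sq_nonneg r), Real.sqrt_sq hr0]
              have hle : Real.sqrt (r^2 - q) ≤ r * Real.exp (-(q/r^2)/2) := by
                rw [hsplit]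
                exact mul_le_mul_of_nonneg_left (sqrt_one_sub_le_exp hz0 hz1) hr0
              calc (Real.sqrt (r^2 - q))^d ≤ (r * Real.exp (-(q/r^2)/2))^d :=
                    pow_le_pow_left₀ (Real.sqrt_nonneg _) hle d
                _ = r^d * Real.exp ((d:ℝ) * (-(q/r^2)/2)) := by
                    rw [mul_pow, ← Real.exp_nat_mul]
                _ ≤ Real.exp (-(q/2)) * r^d := by
                    rw [mul_comm]
                    apply mul_le_mul_of_nonneg_right _ (pow_nonneg hr0 d)
                    apply Real.exp_le_exp.2
                    have hqq : q ≤ q/r^2*(d:ℝ) := by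
                      rw [← sub_nonneg, show q/r^2*(d:ℝ) - q = q*((d:ℝ) - r^2)/r^2 by
                        field_simp]
                      apply div_nonneg _ hr2pos.le
                      apply mul_nonneg hq0
                      rw [hr2]; linarith
                    nlinarith
    have hsum : volume (⋃ i ∈ good, (closedBall x r \ closedBall (xs i) (Real.sqrt d)))
        ≤ ENNReal.ofReal (r^d/2) * U := by
      have hexp : Real.exp (-(q/2)) = 1/(2*(n:ℝ)) := by
        rw [show -(q/2) = -Real.log (2*(n:ℝ)) by rw [hqdef]; rw [ha8]; ring,
          Real.exp_neg, Real.exp_log (by positivity : (0:ℝ) < 2*(n:ℝ))]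
        rw [one_div]
      calc volume (⋃ i ∈ good, (closedBall x r \ closedBall (xs i) (Real.sqrt d)))
          ≤ ∑ i ∈ good, volume (closedBall x r \ closedBall (xs i) (Real.sqrt d)) :=
            measure_biUnion_finset_le _ _
        _ ≤ good.card • (ENNReal.ofReal (Real.exp (-(q/2)) * r^d) * U) :=
            Finset.sum_le_card_nsmul _ _ _ (fun i hi => hcap i hi)
        _ ≤ n • (ENNReal.ofReal (Real.exp (-(q/2)) * r^d) * U) := by
            apply nsmul_le_nsmul_left (zero_le)
            calc good.card ≤ Finset.univ.card := Finset.card_le_univ good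
              _ = n := by rw [Finset.card_univ, Fintype.card_fin]
        _ = ENNReal.ofReal ((n:ℝ) * (Real.exp (-(q/2)) * r^d)) * U := by
            rw [nsmul_eq_mul, ENNReal.ofReal_mul (by positivity : (0:ℝ) ≤ (n:ℝ)),
              ENNReal.ofReal_natCast, mul_assoc]
        _ = ENNReal.ofReal (r^d/2) * U := by
            congr 2
            rw [hexp]
            have hnne : (n:ℝ) ≠ 0 := by positivity
            field_simp
    have hcover : closedBall x r ⊆
        (closedBall x r ∩ ⋂ i ∈ good, closedBall (xs i) (Real.sqrt d))
          ∪ ⋃ i ∈ good, (closedBall x r \ closedBall (xs i) (Real.sqrt d)) := by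
      intro p hp
      by_cases h : ∀ i ∈ good, p ∈ closedBall (xs i) (Real.sqrt d)
      · left
        exact ⟨hp, by simp only [Set.mem_iInter]; exact h⟩
      · right
        push_neg at h
        obtain ⟨i, hi, hdist⟩ := h
        exact Set.mem_biUnion hi ⟨hp, hdist⟩
    have hxr : volume (closedBall x r) = ENNReal.ofReal (r^d) * U := hvol _ _ hr0
    have hhalf : ENNReal.ofReal (r^d/2) * U
        ≤ volume (closedBall x r ∩ ⋂ i ∈ good, closedBall (xs i) (Real.sqrt d)) := by
      have hvle : volume (closedBall x r)
          ≤ volume (closedBall x r ∩ ⋂ i ∈ good, closedBall (xs i) (Real.sqrt d))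
            + ENNReal.ofReal (r^d/2) * U :=
        le_trans (measure_mono hcover) (le_trans (measure_union_le _ _)
          (add_le_add_right hsum _))
      have hsplit : ENNReal.ofReal (r^d) * U
          = ENNReal.ofReal (r^d/2) * U + ENNReal.ofReal (r^d/2) * U := by
        rw [← add_mul, ← ENNReal.ofReal_add (by positivity) (by positivity)]
        congr 2
        ring
      rw [hxr, hsplit] at hvle
      have hfin : ENNReal.ofReal (r^d/2) * U ≠ ⊤ :=
        ENNReal.mul_ne_top ENNReal.ofReal_ne_top hUfin
      exact (ENNReal.add_le_add_iff_right hfin).mp hvle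
    -- conclude
    have hreal : Real.exp (-(2*a)) * (Real.sqrt d)^d ≤ r^d := by
      have hzd : a/(d:ℝ) ≤ 1/2 := by rw [div_le_iff₀ hd0]; linarith
      have hzd0 : 0 ≤ a/(d:ℝ) := by positivity
      have h1 : Real.exp (-(a/d)) ≤ Real.sqrt (1 - a/d) := exp_le_sqrt_one_sub hzd0 hzd
      have h2 : Real.sqrt d * Real.sqrt (1 - a/d) = r := by
        rw [← Real.sqrt_mul hd0.le]
        congr 1
        field_simp
      have h3 : Real.sqrt d * Real.exp (-(a/d)) ≤ r := by
        rw [← h2]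
        exact mul_le_mul_of_nonneg_left h1 hsd0
      calc Real.exp (-(2*a)) * (Real.sqrt d)^d
          ≤ Real.exp (-a) * (Real.sqrt d)^d := by
            apply mul_le_mul_of_nonneg_right _ (pow_nonneg hsd0 d)
            apply Real.exp_le_exp.2; linarith
        _ = (Real.sqrt d * Real.exp (-(a/d)))^d := by
            rw [mul_pow, ← Real.exp_nat_mul]
            rw [show (d:ℝ) * -(a/d) = -a by field_simp]
            ring
        _ ≤ r^d := pow_le_pow_left₀ (by positivity) h3 d
    calc ENNReal.ofReal (Real.exp (-(2*a)))
          * volume (closedBall (0 : EuclideanSpace ℝ (Fin d)) (Real.sqrt d))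
        = ENNReal.ofReal (Real.exp (-(2*a)) * (Real.sqrt d)^d) * U := by
          rw [hB, ← mul_assoc, ← ENNReal.ofReal_mul (Real.exp_pos _).le]
      _ ≤ ENNReal.ofReal (r^d) * U := by
          exact mul_le_mul_left (ENNReal.ofReal_le_ofReal hreal) _
      _ = 2 * (ENNReal.ofReal (r^d/2) * U) := by
          rw [← mul_assoc]
          congr 1
          rw [show (2:ℝ≥0∞) = ENNReal.ofReal 2 by simp, ← ENNReal.ofReal_mul (by norm_num)]
          congr 1
          ring
      _ ≤ 2 * volume (closedBall x r ∩ ⋂ i ∈ good, closedBall (xs i) (Real.sqrt d)) :=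
          mul_le_mul_right hhalf 2
  · -- easy case : sqrt (2d) < a
    push_neg at hca
    refine ⟨closedBall x (Real.sqrt d - 1), measurableSet_closedBall, ?_, ?_⟩
    · intro p hp i hi
      have h1 : dist p x ≤ Real.sqrt d - 1 := mem_closedBall.1 hp
      have h2 : dist (xs i) x ≤ 1 := hxg i hi
      calc dist p (xs i) ≤ dist p x + dist x (xs i) := dist_triangle _ _ _
        _ = dist p x + dist (xs i) x := by rw [dist_comm x (xs i)]
        _ ≤ Real.sqrt d := by linarith
    · have hsda : Real.sqrt d ≤ a := by
        calc Real.sqrt d ≤ Real.sqrt (2*d) := Real.sqrt_le_sqrt (by linarith)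
          _ ≤ a := hca.le
      have hreal : Real.exp (-(2*a)) * (Real.sqrt d)^d ≤ (Real.sqrt d - 1)^d := by
        have hx12 : (1:ℝ)/Real.sqrt d ≤ 1/2 := by
          rw [div_le_div_iff₀ (by linarith) (by norm_num)]
          linarith
        have hx0 : (0:ℝ) ≤ 1/Real.sqrt d := by positivity
        have h1 : Real.exp (-(2*(1/Real.sqrt d))) ≤ 1 - 1/Real.sqrt d :=
          one_sub_ge_exp hx0 hx12
        have h2 : Real.sqrt d * (1 - 1/Real.sqrt d) = Real.sqrt d - 1 := by
          field_simp
        have h3 : Real.sqrt d * Real.exp (-(2*(1/Real.sqrt d))) ≤ Real.sqrt d - 1 := by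
          rw [← h2]
          exact mul_le_mul_of_nonneg_left h1 hsd0
        have hdd : (d:ℝ) * -(2*(1/Real.sqrt d)) = -(2*Real.sqrt d) := by
          have h : Real.sqrt d ≠ 0 := by positivity
          field_simp
          nlinarith [hsdd]
        calc Real.exp (-(2*a)) * (Real.sqrt d)^d
            ≤ Real.exp (-(2*Real.sqrt d)) * (Real.sqrt d)^d := by
              apply mul_le_mul_of_nonneg_right _ (pow_nonneg hsd0 d)
              apply Real.exp_le_exp.2
              linarith
          _ = (Real.sqrt d * Real.exp (-(2*(1/Real.sqrt d))))^d := by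
              rw [mul_pow, ← Real.exp_nat_mul, hdd]
              ring
          _ ≤ (Real.sqrt d - 1)^d := pow_le_pow_left₀ (by positivity) h3 d
      calc ENNReal.ofReal (Real.exp (-(2*a)))
            * volume (closedBall (0 : EuclideanSpace ℝ (Fin d)) (Real.sqrt d))
          = ENNReal.ofReal (Real.exp (-(2*a)) * (Real.sqrt d)^d) * U := by
            rw [hB, ← mul_assoc, ← ENNReal.ofReal_mul (Real.exp_pos _).le]
        _ ≤ ENNReal.ofReal ((Real.sqrt d - 1)^d) * U :=
            mul_le_mul_left (ENNReal.ofReal_le_ofReal hreal) _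
        _ = volume (closedBall x (Real.sqrt d - 1)) := (hvol _ _ (by linarith)).symm
        _ ≤ 2 * volume (closedBall x (Real.sqrt d - 1)) :=
            le_mul_of_one_le_left (zero_le) one_le_two


lemma sqrt_am_gm {y : ℝ} (hy : 0 ≤ y) : Real.sqrt (8*y) ≤ 4 + y/2 := by
  have h : 8*y ≤ ((8+y)/2)^2 := by nlinarith [sq_nonneg (y-8)]
  have h2 := Real.sqrt_le_sqrt h
  rw [Real.sqrt_sq (by linarith)] at h2
  linarith

lemma exp_three : Real.exp 3 ≤ 27 := by
  have h := Real.exp_one_lt_d9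
  have h3 : Real.exp 3 = (Real.exp 1)^3 := by rw [← Real.exp_nat_mul]; norm_num
  have hp : (Real.exp 1)^3 ≤ (2.72:ℝ)^3 :=
    pow_le_pow_left₀ (Real.exp_pos 1).le (by linarith) 3
  rw [h3]
  calc (Real.exp 1)^3 ≤ (2.72:ℝ)^3 := hp
    _ ≤ 27 := by norm_num

lemma log_twelve : Real.log 12 ≤ 5/2 := by
  have h : (12:ℝ) ≤ Real.exp (5/2) := by
    have h5 : (144:ℝ) ≤ Real.exp 5 := by
      have h := Real.exp_one_gt_d9
      have h3 : Real.exp 5 = (Real.exp 1)^5 := by rw [← Real.exp_nat_mul]; norm_num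
      have hp : (2.71:ℝ)^5 ≤ (Real.exp 1)^5 :=
        pow_le_pow_left₀ (by norm_num) (by linarith) 5
      rw [h3]
      calc (144:ℝ) ≤ (2.71:ℝ)^5 := by norm_num
        _ ≤ _ := hp
    have he : Real.exp 5 = Real.exp (5/2) * Real.exp (5/2) := by
      rw [← Real.exp_add]; norm_num
    nlinarith [Real.exp_pos (5/2:ℝ)]
  calc Real.log 12 ≤ Real.log (Real.exp (5/2)) := Real.log_le_log (by norm_num) h
    _ = 5/2 := Real.log_exp _

set_option maxHeartbeats 1000000 in
lemma master {ε δ α : ℝ} {n : ℕ} (hε : 0 < ε) (hε3 : ε ≤ 1/3) (hδ : 0 < δ) (hδ3 : δ ≤ 1/3)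
    (hα : 0 < α) (hα3 : α ≤ 1/3)
    (hn : 100 * (1/ε) * Real.log (1/(α*ε*δ)) ≤ (n:ℝ)) :
    (1:ℝ) ≤ (n:ℝ) ∧
    (2*(1 + Real.sqrt (8*Real.log (2*(n:ℝ)))) + Real.log n + Real.log (1/α)
        + Real.log (1/δ) + 10 ≤ ε*(n:ℝ)/3) ∧
    0 ≤ Real.log (1/α) ∧ 0 ≤ Real.log (1/δ) ∧ 0 ≤ Real.log n := by
  set L := Real.log (1/(α*ε*δ)) with hLdef
  have hαεδ : 0 < α*ε*δ := by positivity
  have hαε : α*ε ≤ 1/9 := by nlinarith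
  have hαεδ3 : α*ε*δ ≤ 1/27 := by nlinarith
  have h27 : 27 ≤ 1/(α*ε*δ) := by rw [le_div_iff₀ hαεδ]; nlinarith
  have hL3 : 3 ≤ L := by
    have h1 : (3:ℝ) ≤ Real.log 27 := by
      rw [Real.le_log_iff_exp_le (by norm_num)]; exact exp_three
    have h2 : Real.log 27 ≤ L := Real.log_le_log (by norm_num) h27
    linarith
  have hεδ : ε*δ ≤ 1 := by nlinarith
  have hαδ : α*δ ≤ 1 := by nlinarith
  have hαε1 : α*ε ≤ 1 := by nlinarith
  have h1α : 1/α ≤ 1/(α*ε*δ) := by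
    rw [div_le_div_iff₀ hα hαεδ]
    nlinarith [mul_le_mul_of_nonneg_left hεδ hα.le]
  have h1δ : 1/δ ≤ 1/(α*ε*δ) := by
    rw [div_le_div_iff₀ hδ hαεδ]
    nlinarith [mul_le_mul_of_nonneg_left hαε1 hδ.le]
  have h1ε : 1/ε ≤ 1/(α*ε*δ) := by
    rw [div_le_div_iff₀ hε hαεδ]
    nlinarith [mul_le_mul_of_nonneg_left hαδ hε.le]
  have hlogα : Real.log (1/α) ≤ L := Real.log_le_log (by positivity) h1α
  have hlogδ : Real.log (1/δ) ≤ L := Real.log_le_log (by positivity) h1δ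
  have hlogε : Real.log (1/ε) ≤ L := Real.log_le_log (by positivity) h1ε
  have hlogα0 : 0 ≤ Real.log (1/α) := Real.log_nonneg (by rw [le_div_iff₀ hα]; linarith)
  have hlogδ0 : 0 ≤ Real.log (1/δ) := Real.log_nonneg (by rw [le_div_iff₀ hδ]; linarith)
  have hεn : 100 * L ≤ ε * n := by
    have h := mul_le_mul_of_nonneg_left hn hε.le
    have heq : ε*(100*(1/ε)*L) = 100*L := by field_simp
    linarith
  have h3ε : 3 ≤ 1/ε := by rw [le_div_iff₀ hε]; linarith
  have hn900 : (900:ℝ) ≤ n := by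
    nlinarith [mul_nonneg (sub_nonneg.2 h3ε) (sub_nonneg.2 hL3)]
  have hn1R : (1:ℝ) ≤ n := by linarith
  have hlogn0 : 0 ≤ Real.log n := Real.log_nonneg hn1R
  have hprod : (ε*(n:ℝ)/12) * (12/ε) = (n:ℝ) := by field_simp
  have hlogn : Real.log n ≤ ε*(n:ℝ)/12 + L + 7/2 := by
    have hp1 : (0:ℝ) < ε*(n:ℝ)/12 := by positivity
    have hp2 : (0:ℝ) < 12/ε := by positivity
    have hm : Real.log n = Real.log (ε*(n:ℝ)/12) + Real.log (12/ε) := by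
      rw [← Real.log_mul (ne_of_gt hp1) (ne_of_gt hp2), hprod]
    have hl1 : Real.log (ε*(n:ℝ)/12) ≤ ε*(n:ℝ)/12 - 1 :=
      Real.log_le_sub_one_of_pos hp1
    have hl2 : Real.log (12/ε) = Real.log 12 + Real.log (1/ε) := by
      rw [show (12:ℝ)/ε = 12*(1/ε) by ring,
        Real.log_mul (by norm_num) (ne_of_gt (by positivity))]
    have := log_twelve
    linarith
  have h2n1 : (1:ℝ) ≤ 2*(n:ℝ) := by linarith
  have hlog2n0 : 0 ≤ Real.log (2*(n:ℝ)) := Real.log_nonneg h2n1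
  have hsq : Real.sqrt (8*Real.log (2*(n:ℝ))) ≤ 4 + Real.log (2*(n:ℝ))/2 :=
    sqrt_am_gm hlog2n0
  have hlog2n : Real.log (2*(n:ℝ)) = Real.log 2 + Real.log n :=
    Real.log_mul (by norm_num) (by positivity)
  have hlog2 : Real.log 2 ≤ 1 := by
    have := Real.log_two_lt_d9
    linarith
  refine ⟨hn1R, ?_, hlogα0, hlogδ0, hlogn0⟩
  nlinarith [hεn, hL3, hlogn, hlogα, hlogδ, hsq, hlog2n, hlog2, hlogn0]

lemma exp_ten : (36:ℝ) ≤ Real.exp 10 := by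
  have h5 : (6:ℝ) ≤ Real.exp 5 := by nlinarith [Real.add_one_le_exp (5:ℝ)]
  have he : Real.exp 10 = Real.exp 5 * Real.exp 5 := by rw [← Real.exp_add]; norm_num
  nlinarith [Real.exp_pos (5:ℝ)]

lemma assemble {G F I W α' : ℝ≥0∞}
    (h1 : 4*G ≤ α' * W) (h2 : 4*F ≤ α' * W) (h3 : W ≤ 2*I) : G + F ≤ α' * (G + I) := by
  have h4 : 4*(G+F) ≤ 4*(α'*I) := by
    calc 4*(G+F) = 4*G + 4*F := by ring
      _ ≤ α'*W + α'*W := add_le_add h1 h2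
      _ = 2*(α'*W) := by ring
      _ ≤ 2*(α'*(2*I)) := mul_le_mul_right (mul_le_mul_right h3 α') 2
      _ = 4*(α'*I) := by ring
  have h5 : G + F ≤ α'*I :=
    (ENNReal.mul_le_mul_iff_right (by norm_num) (by norm_num)).mp h4
  exact le_trans h5 (mul_le_mul_right le_add_self α')


set_option maxHeartbeats 1600000

/-- Accuracy of the exponential-mechanism-style distribution: if at least `2n/3` of the
points `xᵢ` lie within distance `1` of `x`, then (with `f(p)` counting the balls of radius
`√d` around the `xᵢ` that contain `p`, and `V_B` the volume of a ball of radius `√d`),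
the garbage-bucket mass `(4/δ)·V_B` plus the mass of points farther than `1 + √d` from `x`
is at most an `α` fraction of the total mass. -/
theorem stmt_12 :
    ∃ C : ℝ, ∃ d₀ : ℕ, 0 < C ∧
      ∀ d : ℕ, d₀ ≤ d →
      ∀ ε δ α : ℝ, 0 < ε → ε ≤ 1/3 → 0 < δ → δ ≤ 1/3 → 0 < α → α ≤ 1/3 →
      ∀ n : ℕ, C * (1/ε) * Real.log (1 / (α * ε * δ)) ≤ (n : ℝ) →
      ∀ (xs : Fin n → EuclideanSpace ℝ (Fin d)) (x : EuclideanSpace ℝ (Fin d)),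
        (2 * (n : ℝ) / 3) ≤
          ((Finset.univ.filter (fun i => dist (xs i) x ≤ 1)).card : ℝ) →
        ENNReal.ofReal (4 / δ) *
            volume (closedBall (0 : EuclideanSpace ℝ (Fin d)) (Real.sqrt d)) +
          ∫⁻ p in {p : EuclideanSpace ℝ (Fin d) |
              1 ≤ (Finset.univ.filter (fun i => dist p (xs i) ≤ Real.sqrt d)).card ∧
              1 + Real.sqrt d < dist p x},
            ENNReal.ofReal (Real.exp (ε * min
              (((Finset.univ.filter (fun i => dist p (xs i) ≤ Real.sqrt d)).card : ℝ))
              (2 * (n : ℝ) / 3))) ≤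
        ENNReal.ofReal α *
          (ENNReal.ofReal (4 / δ) *
              volume (closedBall (0 : EuclideanSpace ℝ (Fin d)) (Real.sqrt d)) +
            ∫⁻ p in {p : EuclideanSpace ℝ (Fin d) |
                1 ≤ (Finset.univ.filter (fun i => dist p (xs i) ≤ Real.sqrt d)).card},
              ENNReal.ofReal (Real.exp (ε * min
                (((Finset.univ.filter (fun i => dist p (xs i) ≤ Real.sqrt d)).card : ℝ))
                (2 * (n : ℝ) / 3)))) := by
  refine ⟨100, 100, by norm_num, ?_⟩
  intro d hd ε δ α hε hε3 hδ hδ3 hα hα3 n hn xs x hgood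
  obtain ⟨hn1R, hT, hlogα0, hlogδ0, hlogn0⟩ := master hε hε3 hδ hδ3 hα hα3 hn
  have hn1 : 1 ≤ n := by exact_mod_cast hn1R
  have hn0R : (0:ℝ) < n := by linarith
  set a := 1 + Real.sqrt (8*Real.log (2*(n:ℝ))) with hadef
  have hlog2n0 : 0 ≤ Real.log (2*(n:ℝ)) := Real.log_nonneg (by linarith)
  have ha1 : 1 ≤ a := by
    rw [hadef]; nlinarith [Real.sqrt_nonneg (8*Real.log (2*(n:ℝ)))]
  have ha8 : (a-1)^2 = 8 * Real.log (2*(n:ℝ)) := by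
    rw [hadef, add_sub_cancel_left, Real.sq_sqrt (by linarith)]
  -- volume basics
  have hvol : ∀ (c : EuclideanSpace ℝ (Fin d)) (ρ : ℝ), 0 ≤ ρ →
      volume (closedBall c ρ)
        = ENNReal.ofReal (ρ^d) * volume (closedBall (0 : EuclideanSpace ℝ (Fin d)) 1) := by
    intro c ρ hρ
    rw [Measure.addHaar_closedBall' _ _ hρ, finrank_euclideanSpace_fin]
  set B := volume (closedBall (0 : EuclideanSpace ℝ (Fin d)) (Real.sqrt d)) with hBdef
  have hball : ∀ c : EuclideanSpace ℝ (Fin d), volume (closedBall c (Real.sqrt d)) = B := by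
    intro c
    rw [hBdef, hvol c _ (Real.sqrt_nonneg _), hvol 0 _ (Real.sqrt_nonneg _)]
  -- measurability
  have hFmeas : Measurable (fun p : EuclideanSpace ℝ (Fin d) =>
      ((Finset.univ.filter (fun i => dist p (xs i) ≤ Real.sqrt d)).card)) := by
    simp only [Finset.card_filter]
    exact Finset.measurable_sum _ (fun i _ => Measurable.ite
      (measurableSet_closedBall (x := xs i) (ε := Real.sqrt d)) measurable_const
      measurable_const)
  have hgmeas : Measurable (fun p : EuclideanSpace ℝ (Fin d) =>
      ENNReal.ofReal (Real.exp (ε * min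
        (((Finset.univ.filter (fun i => dist p (xs i) ≤ Real.sqrt d)).card : ℝ))
        (2 * (n : ℝ) / 3)))) := by
    apply Measurable.ennreal_ofReal
    apply Real.measurable_exp.comp
    apply Measurable.const_mul
    exact Measurable.min (measurable_from_top.comp hFmeas) measurable_const
  -- good / bad
  have hcards : ((Finset.univ.filter (fun i => ¬ dist (xs i) x ≤ 1)).card : ℝ) ≤ (n:ℝ)/3 := by
    have hsum := Finset.card_filter_add_card_filter_not
      (s := (Finset.univ : Finset (Fin n))) (p := fun i => dist (xs i) x ≤ 1)
    have hcu : (Finset.univ : Finset (Fin n)).card = n := by simp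
    rw [hcu] at hsum
    have := hgood
    have hcast : ((Finset.univ.filter (fun i => dist (xs i) x ≤ 1)).card : ℝ)
        + ((Finset.univ.filter (fun i => ¬ dist (xs i) x ≤ 1)).card : ℝ) = (n:ℝ) := by
      exact_mod_cast congrArg (Nat.cast : ℕ → ℝ) hsum
    linarith
  -- FAR BOUND
  have hFarPoint : ∀ p : EuclideanSpace ℝ (Fin d),
      p ∈ {p : EuclideanSpace ℝ (Fin d) |
          1 ≤ (Finset.univ.filter (fun i => dist p (xs i) ≤ Real.sqrt d)).card ∧
          1 + Real.sqrt d < dist p x} →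
      ((Finset.univ.filter (fun i => dist p (xs i) ≤ Real.sqrt d)).card : ℝ) ≤ (n:ℝ)/3 := by
    intro p hp
    have hsub : (Finset.univ.filter (fun i => dist p (xs i) ≤ Real.sqrt d))
        ⊆ (Finset.univ.filter (fun i => ¬ dist (xs i) x ≤ 1)) := by
      intro i hi
      simp only [Finset.mem_filter, Finset.mem_univ, true_and] at hi ⊢
      intro hcon
      have := dist_triangle p (xs i) x
      have h2 := hp.2
      linarith [h2, hi]
    have := Finset.card_le_card hsub
    calc ((Finset.univ.filter (fun i => dist p (xs i) ≤ Real.sqrt d)).card : ℝ)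
        ≤ ((Finset.univ.filter (fun i => ¬ dist (xs i) x ≤ 1)).card : ℝ) := by
          exact_mod_cast this
      _ ≤ (n:ℝ)/3 := hcards
  have hFarVol : volume {p : EuclideanSpace ℝ (Fin d) |
      1 ≤ (Finset.univ.filter (fun i => dist p (xs i) ≤ Real.sqrt d)).card ∧
      1 + Real.sqrt d < dist p x} ≤ (n : ℝ≥0∞) * B := by
    have hsub : {p : EuclideanSpace ℝ (Fin d) |
        1 ≤ (Finset.univ.filter (fun i => dist p (xs i) ≤ Real.sqrt d)).card ∧
        1 + Real.sqrt d < dist p x} ⊆ ⋃ i ∈ (Finset.univ : Finset (Fin n)),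
          closedBall (xs i) (Real.sqrt d) := by
      intro p hp
      obtain ⟨hp1, _⟩ := hp
      have hne : (Finset.univ.filter (fun i => dist p (xs i) ≤ Real.sqrt d)).Nonempty :=
        Finset.card_pos.1 hp1
      obtain ⟨i, hi⟩ := hne
      simp only [Finset.mem_filter, Finset.mem_univ, true_and] at hi
      exact Set.mem_biUnion (Finset.mem_univ i) hi
    calc volume {p : EuclideanSpace ℝ (Fin d) |
        1 ≤ (Finset.univ.filter (fun i => dist p (xs i) ≤ Real.sqrt d)).card ∧
        1 + Real.sqrt d < dist p x}
        ≤ volume (⋃ i ∈ (Finset.univ : Finset (Fin n)), closedBall (xs i) (Real.sqrt d)) :=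
          measure_mono hsub
      _ ≤ ∑ i ∈ (Finset.univ : Finset (Fin n)), volume (closedBall (xs i) (Real.sqrt d)) :=
          measure_biUnion_finset_le _ _
      _ = (n : ℝ≥0∞) * B := by
          simp only [hball]
          rw [Finset.sum_const, Finset.card_univ, Fintype.card_fin, nsmul_eq_mul]
  have hFarInt : (∫⁻ p in {p : EuclideanSpace ℝ (Fin d) |
        1 ≤ (Finset.univ.filter (fun i => dist p (xs i) ≤ Real.sqrt d)).card ∧
        1 + Real.sqrt d < dist p x},
      ENNReal.ofReal (Real.exp (ε * min
        (((Finset.univ.filter (fun i => dist p (xs i) ≤ Real.sqrt d)).card : ℝ))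
        (2 * (n : ℝ) / 3))))
      ≤ ENNReal.ofReal ((n:ℝ) * Real.exp (ε * ((n:ℝ)/3))) * B := by
    calc (∫⁻ p in {p : EuclideanSpace ℝ (Fin d) |
          1 ≤ (Finset.univ.filter (fun i => dist p (xs i) ≤ Real.sqrt d)).card ∧
          1 + Real.sqrt d < dist p x},
        ENNReal.ofReal (Real.exp (ε * min
          (((Finset.univ.filter (fun i => dist p (xs i) ≤ Real.sqrt d)).card : ℝ))
          (2 * (n : ℝ) / 3))))
        ≤ ∫⁻ _p in {p : EuclideanSpace ℝ (Fin d) |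
            1 ≤ (Finset.univ.filter (fun i => dist p (xs i) ≤ Real.sqrt d)).card ∧
            1 + Real.sqrt d < dist p x},
          ENNReal.ofReal (Real.exp (ε * ((n:ℝ)/3))) := by
          apply setLIntegral_mono measurable_const
          intro p hp
          apply ENNReal.ofReal_le_ofReal
          apply Real.exp_le_exp.2
          apply mul_le_mul_of_nonneg_left _ hε.le
          exact le_trans (min_le_left _ _) (hFarPoint p hp)
      _ = ENNReal.ofReal (Real.exp (ε * ((n:ℝ)/3))) * volume {p : EuclideanSpace ℝ (Fin d) |
            1 ≤ (Finset.univ.filter (fun i => dist p (xs i) ≤ Real.sqrt d)).card ∧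
            1 + Real.sqrt d < dist p x} := setLIntegral_const _ _
      _ ≤ ENNReal.ofReal (Real.exp (ε * ((n:ℝ)/3))) * ((n : ℝ≥0∞) * B) :=
          mul_le_mul_right hFarVol _
      _ = ENNReal.ofReal ((n:ℝ) * Real.exp (ε * ((n:ℝ)/3))) * B := by
          rw [ENNReal.ofReal_mul (by positivity), ENNReal.ofReal_natCast, ← mul_assoc,
            mul_comm (ENNReal.ofReal (Real.exp (ε * ((n:ℝ)/3)))) (n : ℝ≥0∞), mul_assoc]
  -- NEAR BOUND
  have hd100 : 100 ≤ d := hd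
  obtain ⟨S, hSm, hSprop, hSvol⟩ := near_volume d n hd100 hn1 xs x
    (Finset.univ.filter (fun i => dist (xs i) x ≤ 1))
    (fun i hi => (Finset.mem_filter.1 hi).2) a ha1 ha8
  have hgcard : (2*(n:ℝ)/3) ≤ ((Finset.univ.filter (fun i => dist (xs i) x ≤ 1)).card : ℝ) :=
    hgood
  have hSlow : ∀ p ∈ S, (2*(n:ℝ)/3) ≤
      (((Finset.univ.filter (fun i => dist p (xs i) ≤ Real.sqrt d)).card : ℝ)) := by
    intro p hp
    have hsub : (Finset.univ.filter (fun i => dist (xs i) x ≤ 1))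
        ⊆ (Finset.univ.filter (fun i => dist p (xs i) ≤ Real.sqrt d)) := by
      intro i hi
      simp only [Finset.mem_filter, Finset.mem_univ, true_and]
      exact hSprop p hp i hi
    have h := Finset.card_le_card hsub
    have : (((Finset.univ.filter (fun i => dist (xs i) x ≤ 1)).card : ℝ))
        ≤ (((Finset.univ.filter (fun i => dist p (xs i) ≤ Real.sqrt d)).card : ℝ)) := by
      exact_mod_cast h
    linarith
  have hSsub : S ⊆ {p : EuclideanSpace ℝ (Fin d) |
      1 ≤ (Finset.univ.filter (fun i => dist p (xs i) ≤ Real.sqrt d)).card} := by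
    intro p hp
    have := hSlow p hp
    simp only [Set.mem_setOf_eq]
    rcases Nat.eq_zero_or_pos
        ((Finset.univ.filter (fun i => dist p (xs i) ≤ Real.sqrt d)).card) with h0 | hpos
    · exfalso
      rw [h0] at this
      norm_num at this
      linarith
    · exact hpos
  have hNear : ENNReal.ofReal (Real.exp (ε * (2*(n:ℝ)/3))) * volume S ≤
      ∫⁻ p in {p : EuclideanSpace ℝ (Fin d) |
          1 ≤ (Finset.univ.filter (fun i => dist p (xs i) ≤ Real.sqrt d)).card},
        ENNReal.ofReal (Real.exp (ε * min
          (((Finset.univ.filter (fun i => dist p (xs i) ≤ Real.sqrt d)).card : ℝ))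
          (2 * (n : ℝ) / 3))) := by
    calc ENNReal.ofReal (Real.exp (ε * (2*(n:ℝ)/3))) * volume S
        = ∫⁻ _p in S, ENNReal.ofReal (Real.exp (ε * (2*(n:ℝ)/3))) :=
          (setLIntegral_const _ _).symm
      _ ≤ ∫⁻ p in S, ENNReal.ofReal (Real.exp (ε * min
            (((Finset.univ.filter (fun i => dist p (xs i) ≤ Real.sqrt d)).card : ℝ))
            (2 * (n : ℝ) / 3))) := by
          apply setLIntegral_mono hgmeas
          intro p hp
          apply ENNReal.ofReal_le_ofReal
          apply Real.exp_le_exp.2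
          apply mul_le_mul_of_nonneg_left _ hε.le
          exact le_min (hSlow p hp) le_rfl
      _ ≤ ∫⁻ p in {p : EuclideanSpace ℝ (Fin d) |
            1 ≤ (Finset.univ.filter (fun i => dist p (xs i) ≤ Real.sqrt d)).card},
          ENNReal.ofReal (Real.exp (ε * min
            (((Finset.univ.filter (fun i => dist p (xs i) ≤ Real.sqrt d)).card : ℝ))
            (2 * (n : ℝ) / 3))) := lintegral_mono_set hSsub
  -- real arithmetic
  have hεn0 : (0:ℝ) ≤ ε * (n:ℝ) := by positivity
  have hsplit : ε*(2*(n:ℝ)/3) = ε*((n:ℝ)/3) + ε*(n:ℝ)/3 := by ring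
  have hexpn : Real.exp (Real.log n) = (n:ℝ) := Real.exp_log hn0R
  have hexpα : Real.exp (Real.log (1/α)) = 1/α := Real.exp_log (by positivity)
  have hexpδ : Real.exp (Real.log (1/δ)) = 1/δ := Real.exp_log (by positivity)
  have r2 : 4*((n:ℝ) * Real.exp (ε * ((n:ℝ)/3))) ≤
      α * (Real.exp (ε * (2*(n:ℝ)/3)) * Real.exp (-(2*a))) := by
    have hkey : Real.log n + Real.log (1/α) + 10 + ε*((n:ℝ)/3) ≤ ε*(2*(n:ℝ)/3) - 2*a := by
      linarith [hT, hlogδ0]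
    have e1 : Real.exp (ε*(2*(n:ℝ)/3)) * Real.exp (-(2*a))
        = Real.exp (ε*(2*(n:ℝ)/3) - 2*a) := by
      rw [← Real.exp_add]; ring_nf
    have e2 : Real.exp (Real.log n + Real.log (1/α) + 10 + ε*((n:ℝ)/3))
        ≤ Real.exp (ε*(2*(n:ℝ)/3) - 2*a) := Real.exp_le_exp.2 hkey
    have e3 : Real.exp (Real.log n + Real.log (1/α) + 10 + ε*((n:ℝ)/3))
        = (n:ℝ) * (1/α) * (Real.exp 10 * Real.exp (ε*((n:ℝ)/3))) := by
      rw [Real.exp_add, Real.exp_add, Real.exp_add, hexpn, hexpα]; ring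
    have e4 : (n:ℝ) * (1/α) * (Real.exp 10 * Real.exp (ε*((n:ℝ)/3)))
        ≤ Real.exp (ε*(2*(n:ℝ)/3) - 2*a) := by rw [← e3]; exact e2
    have e5 : α * ((n:ℝ) * (1/α) * (Real.exp 10 * Real.exp (ε*((n:ℝ)/3))))
        = (n:ℝ) * (Real.exp 10 * Real.exp (ε*((n:ℝ)/3))) := by field_simp
    rw [e1]
    calc 4*((n:ℝ)*Real.exp (ε*((n:ℝ)/3)))
        ≤ (n:ℝ) * (Real.exp 10 * Real.exp (ε*((n:ℝ)/3))) := by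
          nlinarith [mul_nonneg (mul_nonneg hn0R.le (Real.exp_pos (ε*((n:ℝ)/3))).le)
            (by linarith [exp_ten] : (0:ℝ) ≤ Real.exp 10 - 4)]
      _ = α * ((n:ℝ) * (1/α) * (Real.exp 10 * Real.exp (ε*((n:ℝ)/3)))) := e5.symm
      _ ≤ α * Real.exp (ε*(2*(n:ℝ)/3) - 2*a) := mul_le_mul_of_nonneg_left e4 hα.le
  have r1 : 4*(4/δ) ≤ α * (Real.exp (ε * (2*(n:ℝ)/3)) * Real.exp (-(2*a))) := by
    have hkey : Real.log (1/α) + Real.log (1/δ) + 10 ≤ ε*(2*(n:ℝ)/3) - 2*a := by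
      linarith [hT, hlogn0, hεn0]
    have e1 : Real.exp (ε*(2*(n:ℝ)/3)) * Real.exp (-(2*a))
        = Real.exp (ε*(2*(n:ℝ)/3) - 2*a) := by
      rw [← Real.exp_add]; ring_nf
    have e2 : Real.exp (Real.log (1/α) + Real.log (1/δ) + 10)
        ≤ Real.exp (ε*(2*(n:ℝ)/3) - 2*a) := Real.exp_le_exp.2 hkey
    have e3 : Real.exp (Real.log (1/α) + Real.log (1/δ) + 10)
        = (1/α) * (1/δ) * Real.exp 10 := by
      rw [Real.exp_add, Real.exp_add, hexpα, hexpδ]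
    have e4 : (1/α) * (1/δ) * Real.exp 10 ≤ Real.exp (ε*(2*(n:ℝ)/3) - 2*a) := by
      rw [← e3]; exact e2
    have e5 : α * ((1/α) * (1/δ) * Real.exp 10) = (1/δ) * Real.exp 10 := by
      field_simp
    rw [e1]
    calc 4*(4/δ) ≤ (1/δ) * Real.exp 10 := by
          rw [show 4*(4/δ) = 16*(1/δ) by ring]
          nlinarith [exp_ten, one_div_pos.2 hδ]
      _ = α * ((1/α) * (1/δ) * Real.exp 10) := e5.symm
      _ ≤ α * Real.exp (ε*(2*(n:ℝ)/3) - 2*a) := mul_le_mul_of_nonneg_left e4 hα.le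
  -- lift to ENNReal and conclude
  apply assemble (W := ENNReal.ofReal (Real.exp (ε*(2*(n:ℝ)/3)))
    * (ENNReal.ofReal (Real.exp (-(2*a))) * B))
  · calc (4:ℝ≥0∞) * (ENNReal.ofReal (4/δ) * B) = ENNReal.ofReal (4*(4/δ)) * B := by
          rw [ENNReal.ofReal_mul (by norm_num : (0:ℝ) ≤ 4), ENNReal.ofReal_ofNat, mul_assoc]
      _ ≤ ENNReal.ofReal (α * (Real.exp (ε * (2*(n:ℝ)/3)) * Real.exp (-(2*a)))) * B :=
        mul_le_mul_left (ENNReal.ofReal_le_ofReal r1) B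
      _ = ENNReal.ofReal α * (ENNReal.ofReal (Real.exp (ε*(2*(n:ℝ)/3)))
          * (ENNReal.ofReal (Real.exp (-(2*a))) * B)) := by
          rw [ENNReal.ofReal_mul hα.le, ENNReal.ofReal_mul (Real.exp_pos _).le]
          ring
  · calc (4:ℝ≥0∞) * (∫⁻ p in {p : EuclideanSpace ℝ (Fin d) |
          1 ≤ (Finset.univ.filter (fun i => dist p (xs i) ≤ Real.sqrt d)).card ∧
          1 + Real.sqrt d < dist p x},
        ENNReal.ofReal (Real.exp (ε * min
          (((Finset.univ.filter (fun i => dist p (xs i) ≤ Real.sqrt d)).card : ℝ))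
          (2 * (n : ℝ) / 3))))
        ≤ 4 * (ENNReal.ofReal ((n:ℝ) * Real.exp (ε * ((n:ℝ)/3))) * B) :=
          mul_le_mul_right hFarInt 4
      _ = ENNReal.ofReal (4*((n:ℝ) * Real.exp (ε * ((n:ℝ)/3)))) * B := by
          rw [ENNReal.ofReal_mul (by norm_num : (0:ℝ) ≤ 4), ENNReal.ofReal_ofNat, mul_assoc]
      _ ≤ ENNReal.ofReal (α * (Real.exp (ε * (2*(n:ℝ)/3)) * Real.exp (-(2*a)))) * B :=
        mul_le_mul_left (ENNReal.ofReal_le_ofReal r2) B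
      _ = ENNReal.ofReal α * (ENNReal.ofReal (Real.exp (ε*(2*(n:ℝ)/3)))
          * (ENNReal.ofReal (Real.exp (-(2*a))) * B)) := by
          rw [ENNReal.ofReal_mul hα.le, ENNReal.ofReal_mul (Real.exp_pos _).le]
          ring
  · calc ENNReal.ofReal (Real.exp (ε*(2*(n:ℝ)/3)))
        * (ENNReal.ofReal (Real.exp (-(2*a))) * B)
        ≤ ENNReal.ofReal (Real.exp (ε*(2*(n:ℝ)/3))) * (2 * volume S) :=
          mul_le_mul_right hSvol _
      _ = 2 * (ENNReal.ofReal (Real.exp (ε*(2*(n:ℝ)/3))) * volume S) := by ring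
      _ ≤ 2 * (∫⁻ p in {p : EuclideanSpace ℝ (Fin d) |
            1 ≤ (Finset.univ.filter (fun i => dist p (xs i) ≤ Real.sqrt d)).card},
          ENNReal.ofReal (Real.exp (ε * min
            (((Finset.univ.filter (fun i => dist p (xs i) ≤ Real.sqrt d)).card : ℝ))
            (2 * (n : ℝ) / 3)))) := mul_le_mul_right hNear 2
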